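/- Let S ⊆ {0,1}^n be the set of minimizers of h_max, assume S is a proper subset (some b lies outside S), let λ₁ be the minimum value of h_max, λ₂ = min over b ∉ S of h_max(b), assume λ₁ > 0, and let r = (λ₂ − λ₁)/λ₁. If the positive integer p satisfies (p : ℝ) > log M / log(r + 1), then the degree-p approximation separates the ground space from all excited states: min over b ∉ S of h_p(b) > max over s ∈ S of h_p(s). -/

import Mathlib

/-- **Degenerate case: separation of the ground space.**
Let `S` be the set of minimizers of `h_max`, a proper subset, `λ₁ > 0` the
minimum value, `λ₂ = min_{b ∉ S} h_max(b)`, `r = (λ₂ − λ₁)/λ₁`.  If the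
positive integer `p` satisfies `(p : ℝ) > log M / log (r + 1)`, then
`min_{b ∉ S} h_p(b) > max_{s ∈ S} h_p(s)`. -/
theorem moqa_degenerate_separation
    (n M p : ℕ) (hM : 1 ≤ M) (hp : 1 ≤ p) (hn : 1 ≤ n)
    (h : Fin M → (Fin n → Bool) → ℝ)
    (hnn : ∀ m b, 0 ≤ h m b)
    (hmax hP : (Fin n → Bool) → ℝ)
    (hmax_def : ∀ b, IsGreatest (Set.range fun m => h m b) (hmax b))
    (hP_def : ∀ b, hP b = ∑ m : Fin M, (h m b) ^ p)
    (lam1 lam2 r : ℝ)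
    (hlam1 : IsLeast (Set.range hmax) lam1)
    (hlam1pos : 0 < lam1)
    (S : Set (Fin n → Bool))
    (hS : S = {b | hmax b = lam1})
    (hproper : ∃ b, b ∉ S)
    (hlam2 : IsLeast (hmax '' Sᶜ) lam2)
    (hr : r = (lam2 - lam1) / lam1)
    (hpbig : (p : ℝ) > Real.log M / Real.log (r + 1)) :
    ∀ νexc νgnd, IsLeast (hP '' Sᶜ) νexc → IsGreatest (hP '' S) νgnd →
      νgnd < νexc := by
  intro νexc νgnd hexc hgnd
  -- lam1 < lam2
  obtain ⟨b2, hb2S, hb2⟩ := hlam2.1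
  have hlam12 : lam1 < lam2 := by
    have h1 : lam1 ≤ hmax b2 := hlam1.2 ⟨b2, rfl⟩
    have h2 : hmax b2 ≠ lam1 := by
      intro he; exact hb2S (by rw [hS]; exact he)
    rw [← hb2]; exact lt_of_le_of_ne h1 (Ne.symm h2)
  have hlam2pos : 0 < lam2 := hlam1pos.trans hlam12
  -- r + 1 = lam2 / lam1
  have hr1 : (r + 1) * lam1 = lam2 := by
    rw [hr]; field_simp; ring
  have hr1gt : 1 < r + 1 := by
    rw [hr]
    have : 0 < (lam2 - lam1) / lam1 := div_pos (by linarith) hlam1pos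
    linarith
  -- M < (r+1)^p
  have hMlt : (M : ℝ) < (r + 1) ^ p := by
    have hlog : 0 < Real.log (r + 1) := Real.log_pos hr1gt
    have hMpos : (0 : ℝ) < M := by exact_mod_cast hM
    have : Real.log M < (p : ℝ) * Real.log (r + 1) := by
      rw [gt_iff_lt, div_lt_iff₀ hlog] at hpbig; exact hpbig
    rw [← Real.log_pow] at this
    exact (Real.log_lt_log_iff hMpos (pow_pos (by linarith) p)).mp this
  -- νexc ≥ lam2 ^ p
  obtain ⟨b, hbS, hb⟩ := hexc.1
  have hbge : lam2 ≤ hmax b := hlam2.2 ⟨b, hbS, rfl⟩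
  obtain ⟨m0, hm0⟩ := (hmax_def b).1
  have hexcge : lam2 ^ p ≤ νexc := by
    rw [← hb, hP_def]
    have h1 : lam2 ^ p ≤ (hmax b) ^ p :=
      pow_le_pow_left₀ hlam2pos.le hbge p
    have h2 : (hmax b) ^ p ≤ ∑ m : Fin M, (h m b) ^ p := by
      calc (hmax b) ^ p = (h m0 b) ^ p := by rw [← hm0]
        _ ≤ ∑ m : Fin M, (h m b) ^ p :=
          Finset.single_le_sum (fun m _ => pow_nonneg (hnn m b) p)
            (Finset.mem_univ m0)
    linarith
  -- νgnd ≤ M * lam1 ^ p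
  obtain ⟨s, hsS, hs⟩ := hgnd.1
  have hsval : hmax s = lam1 := by rw [hS] at hsS; exact hsS
  have hgndle : νgnd ≤ (M : ℝ) * lam1 ^ p := by
    rw [← hs, hP_def]
    calc ∑ m : Fin M, (h m s) ^ p ≤ ∑ _m : Fin M, lam1 ^ p := by
          apply Finset.sum_le_sum
          intro m _
          apply pow_le_pow_left₀ (hnn m s)
          rw [← hsval]; exact (hmax_def s).2 ⟨m, rfl⟩
      _ = (M : ℝ) * lam1 ^ p := by simp [Finset.sum_const]
  -- combine
  have key : (M : ℝ) * lam1 ^ p < lam2 ^ p := by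
    calc (M : ℝ) * lam1 ^ p < (r + 1) ^ p * lam1 ^ p := by
          apply mul_lt_mul_of_pos_right hMlt (pow_pos hlam1pos p)
      _ = ((r + 1) * lam1) ^ p := (mul_pow _ _ _).symm
      _ = lam2 ^ p := by rw [hr1]
  linarith
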